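/- In a free group F of rank r ≥ 2, every negligible set is CT-negligible (generic-complement): if P ⊆ F is such that there is ε > 0 with all but finitely many p ∈ P having a piece of length ≥ ε|p|, then |P ∩ Bₙ| / |Bₙ| → 0 as n → ∞, where Bₙ is the ball of radius n in the Cayley graph of F with respect to a basis. -/

import Mathlib

/-- `v` occurs in `w` starting at position `i`. -/
def occursAt {X : Type*} (v w : List (X × Bool)) (i : ℕ) : Prop :=
  (w.drop i).take v.length = v

/-- The formal inverse of a word. -/
def wordInv {X : Type*} (v : List (X × Bool)) : List (X × Bool) :=
  (v.map (fun p => (p.1, !p.2))).reverse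

/-- `v` is a piece of `w`: a nontrivial subword occurring in at least two different
ways (possibly as the inverse, possibly overlapping). -/
def IsPiece {X : Type*} (v w : List (X × Bool)) : Prop :=
  v ≠ [] ∧ ((∃ i j, i ≠ j ∧ occursAt v w i ∧ occursAt v w j) ∨
    (∃ i j, occursAt v w i ∧ occursAt (wordInv v) w j))

/-- Reduced word length of an element of the free group. -/
def glen {X : Type*} [DecidableEq X] (g : FreeGroup X) : ℕ := g.toWord.length


open List Finset

section Words
variable {X : Type*} [DecidableEq X]

def Red' (w : List (X × Bool)) : Prop := List.Chain' (fun a b => b ≠ (a.1, !a.2)) w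

theorem reduce_eq_self_of_red' : ∀ {w : List (X × Bool)}, Red' w → FreeGroup.reduce w = w := by
  intro w hw
  induction w with
  | nil => rfl
  | cons a l ih =>
    have hl : Red' l := hw.tail
    rw [FreeGroup.reduce.cons, ih hl]
    cases l with
    | nil => rfl
    | cons b t =>
      have hab : b ≠ (a.1, !a.2) := (List.isChain_cons.mp hw).1 b rfl
      simp only []
      rw [if_neg]
      rintro ⟨h1, h2⟩
      exact hab (by cases a; cases b; simp_all)

theorem not_red'_split : ∀ {w : List (X × Bool)}, ¬ Red' w →
    ∃ (L₂ L₃ : List (X × Bool)) (x : X) (b : Bool), w = L₂ ++ (x, b) :: (x, !b) :: L₃ := by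
  intro w
  induction w with
  | nil => exact fun h => absurd List.isChain_nil h
  | cons a l ih =>
    intro h
    rcases l with _ | ⟨c, t⟩
    · exact absurd (List.isChain_singleton a) h
    · by_cases hc : Red' (c :: t)
      · by_cases hac : c = (a.1, !a.2)
        · exact ⟨[], t, a.1, a.2, by subst hac; simp⟩
        · exact absurd (List.isChain_cons_cons.mpr ⟨hac, hc⟩) h
      · obtain ⟨L₂, L₃, x, b, hsp⟩ := ih hc
        exact ⟨a :: L₂, L₃, x, b, by rw [hsp]; rfl⟩

theorem red'_toWord (g : FreeGroup X) : Red' g.toWord := by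
  by_contra h
  obtain ⟨L₂, L₃, x, b, hsp⟩ := not_red'_split h
  exact FreeGroup.reduce.not (L₁ := g.toWord) (by rw [FreeGroup.reduce_toWord, hsp])

end Words

section Count
variable {X : Type*} [DecidableEq X] [Fintype X]

def nextOK : List (X × Bool) → Finset (X × Bool)
  | [] => Finset.univ
  | b :: _ => Finset.univ.filter (fun a => b ≠ (a.1, !a.2))

def RW (X : Type*) [DecidableEq X] [Fintype X] : ℕ → Finset (List (X × Bool))
  | 0 => {[]}
  | t + 1 => (RW X t).biUnion (fun w => (nextOK w).image (fun a => a :: w))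

lemma mem_RW : ∀ {t : ℕ} {w : List (X × Bool)}, w ∈ RW X t ↔ Red' w ∧ w.length = t := by
  intro t
  induction t with
  | zero =>
    intro w
    simp only [RW, Finset.mem_singleton]
    constructor
    · rintro rfl; exact ⟨List.isChain_nil, rfl⟩
    · rintro ⟨-, h⟩; exact List.length_eq_zero_iff.mp h
  | succ t ih =>
    intro w
    simp only [RW, Finset.mem_biUnion, Finset.mem_image]
    constructor
    · rintro ⟨u, hu, a, ha, rfl⟩
      obtain ⟨hru, hlu⟩ := ih.mp hu
      refine ⟨?_, by simp [hlu]⟩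
      cases u with
      | nil => exact List.isChain_singleton a
      | cons b s =>
        refine List.isChain_cons_cons.mpr ⟨?_, hru⟩
        simpa [nextOK] using ha
    · rintro ⟨hr, hl⟩
      cases w with
      | nil => simp at hl
      | cons a u =>
        refine ⟨u, ih.mpr ⟨hr.tail, by simpa using hl⟩, a, ?_, rfl⟩
        cases u with
        | nil => simp [nextOK]
        | cons b s => simpa [nextOK] using (List.isChain_cons_cons.mp hr).1

lemma card_nextOK_cons (b : X × Bool) (l : List (X × Bool)) :
    (nextOK (b :: l)).card = Fintype.card (X × Bool) - 1 := by
  have : nextOK (b :: l) = Finset.univ \ {(b.1, !b.2)} := by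
    ext a
    simp only [nextOK, Finset.mem_filter, Finset.mem_univ, true_and, Finset.mem_sdiff,
      Finset.mem_singleton]
    have : b = (a.1, !a.2) ↔ a = (b.1, !b.2) := by
      constructor <;> (rintro rfl; simp)
    rw [ne_eq, this]
  rw [this, Finset.card_sdiff_of_subset (by simp)]
  simp

lemma card_RW_succ (t : ℕ) :
    (RW X (t + 1)).card = ∑ w ∈ RW X t, (nextOK w).card := by
  rw [RW, Finset.card_biUnion]
  · refine Finset.sum_congr rfl fun w _ => ?_
    rw [Finset.card_image_of_injective _ (fun a b h => (List.cons_eq_cons.mp h).1)]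
  · intro w hw u hu hwu
    simp only [Finset.disjoint_left, Finset.mem_image]
    rintro x ⟨a, _, rfl⟩ ⟨c, _, h⟩
    exact hwu (by rw [(List.cons_eq_cons.mp h).2])

lemma card_RW (t : ℕ) : (RW X t).card =
    if t = 0 then 1 else Fintype.card (X × Bool) * (Fintype.card (X × Bool) - 1) ^ (t - 1) := by
  induction t with
  | zero => simp [RW]
  | succ t ih =>
    rw [card_RW_succ]
    cases t with
    | zero => simp [RW, nextOK]
    | succ s =>
      have : ∀ w ∈ RW X (s + 1), (nextOK w).card = Fintype.card (X × Bool) - 1 := by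
        intro w hw
        obtain ⟨-, hl⟩ := mem_RW.mp hw
        cases w with
        | nil => simp at hl
        | cons b l => exact card_nextOK_cons b l
      rw [Finset.sum_congr rfl this, Finset.sum_const, smul_eq_mul, ih]
      simp only [Nat.succ_ne_zero, if_neg, if_false, Nat.add_sub_cancel]
      rw [pow_succ]
      ring

end Count

section Pieces
variable {X : Type*}

lemma occursAt_len {v w : List (X × Bool)} {i : ℕ} (h : occursAt v w i) (hv : v ≠ []) :
    i + v.length ≤ w.length := by
  have h1 : min v.length (w.length - i) = v.length := by
    simpa using congrArg List.length h
  have h2 : 0 < v.length := List.length_pos_iff.mpr hv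
  omega

lemma occursAt_get {v w : List (X × Bool)} {i : ℕ} (h : occursAt v w i) {t : ℕ}
    (ht : t < v.length) : w[i+t]? = v[t]? := by
  conv_rhs => rw [← h]
  rw [List.getElem?_take, if_pos ht, List.getElem?_drop]

@[simp] lemma wordInv_length (v : List (X × Bool)) : (wordInv v).length = v.length := by
  simp [wordInv]

lemma wordInv_wordInv (v : List (X × Bool)) : wordInv (wordInv v) = v := by
  simp only [wordInv, List.map_reverse, List.reverse_reverse, List.map_map]
  conv_rhs => rw [← List.map_id v]
  apply List.map_congr_left
  intro a _; simp

lemma wordInv_get {v : List (X × Bool)} {t : ℕ} (ht : t < v.length) :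
    (wordInv v)[t]? = (v[v.length - 1 - t]?).map (fun p => (p.1, !p.2)) := by
  rw [wordInv, List.getElem?_reverse (by simpa using ht), List.length_map, List.getElem?_map]

lemma occursAt_take {v w : List (X × Bool)} {i : ℕ} (h : occursAt v w i) {L : ℕ}
    (hL : L ≤ v.length) : occursAt (v.take L) w i := by
  unfold occursAt at *
  rw [List.length_take, min_eq_left hL]
  conv_rhs => rw [← h]
  rw [List.take_take, min_eq_left hL]

lemma occursAt_drop {v w : List (X × Bool)} {j : ℕ} (h : occursAt v w j) (d : ℕ) :
    occursAt (v.drop d) w (j + d) := by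
  unfold occursAt at *
  rw [List.length_drop]
  conv_rhs => rw [← h]
  rw [List.drop_take, List.drop_drop]

lemma wordInv_take {v : List (X × Bool)} {L : ℕ} (hL : L ≤ v.length) :
    wordInv (v.take L) = (wordInv v).drop (v.length - L) := by
  rw [wordInv, List.map_take, List.reverse_take, wordInv, List.length_map]

lemma piece_trunc {v w : List (X × Bool)} (h : IsPiece v w) {L : ℕ} (h1 : 1 ≤ L)
    (hL : L ≤ v.length) : ∃ v', v'.length = L ∧ IsPiece v' w := by
  refine ⟨v.take L, by rw [List.length_take]; omega, ?_, ?_⟩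
  · have : (v.take L).length = L := by rw [List.length_take]; omega
    intro hc; rw [hc] at this; simp at this; omega
  · rcases h.2 with ⟨i, j, hij, ha, hb⟩ | ⟨i, j, ha, hb⟩
    · exact Or.inl ⟨i, j, hij, occursAt_take ha hL, occursAt_take hb hL⟩
    · refine Or.inr ⟨i, j + (v.length - L), occursAt_take ha hL, ?_⟩
      rw [wordInv_take hL]
      exact occursAt_drop hb _

def src (b : Bool) (i j L s : ℕ) : ℕ := if b then i + j + L - 1 - s else i + (s - i) % (j - i)

def Qp (b : Bool) (i j L h : ℕ) (w : List (X × Bool)) : Prop :=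
  j + L ≤ w.length ∧ ∀ s, j + L - h ≤ s → s < j + L →
    src b i j L s < j + L - h ∧
    w[s]? = (w[src b i j L s]?).map (fun p => if b then (p.1, !p.2) else p)

lemma extract {w v : List (X × Bool)} (hp : IsPiece v w) {L : ℕ} (hL : v.length = L)
    (h1 : 1 ≤ L) : ∃ b i j, i + L ≤ w.length ∧ Qp b i j L (L / 2) w := by
  have hv : v ≠ [] := hp.1
  rcases hp.2 with ⟨i0, j0, hij, ha0, hb0⟩ | ⟨i0, j0, ha0, hb0⟩
  · -- same orientation; wlog i < j
    have key : ∀ i j, i < j → occursAt v w i → occursAt v w j →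
        ∃ b i' j', i' + L ≤ w.length ∧ Qp b i' j' L (L / 2) w := by
      intro i j hij ha hb
      have hiL : i + L ≤ w.length := hL ▸ occursAt_len ha hv
      have hjL : j + L ≤ w.length := hL ▸ occursAt_len hb hv
      set d := j - i with hd
      have hd1 : 1 ≤ d := by omega
      have per : ∀ t, t < L → w[j + t]? = w[i + t]? := by
        intro t ht
        rw [occursAt_get ha (by omega), occursAt_get hb (by omega)]
      have claim : ∀ s, i ≤ s → s < j + L → w[s]? = w[i + (s - i) % d]? := by
        intro s
        induction s using Nat.strong_induction_on with
        | _ s ih =>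
          intro his hsj
          by_cases hs' : s < j
          · rw [Nat.mod_eq_of_lt (by omega)]
            congr 1; omega
          · have e1 : w[s]? = w[s - d]? := by
              have := per (s - j) (by omega)
              have e2 : j + (s - j) = s := by omega
              have e3 : i + (s - j) = s - d := by omega
              rwa [e2, e3] at this
            rw [e1, ih (s - d) (by omega) (by omega) (by omega)]
            congr 1
            have : (s - i) % d = (s - i - d) % d := Nat.mod_eq_sub_mod (by omega)
            have e4 : s - d - i = s - i - d := by omega
            rw [e4, ← this]
      refine ⟨false, i, j, hiL, hjL, ?_⟩
      intro s hs1 hs2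
      have hsrc : src false i j L s = i + (s - i) % d := by simp [src, hd]
      have hlt : src false i j L s < j + L - L / 2 := by
        rw [hsrc]
        have := Nat.mod_lt (s - i) (y := d) (by omega)
        omega
      refine ⟨hlt, ?_⟩
      rw [hsrc, claim s (by omega) hs2]
      simp
  -- dispatch wlog
    rcases Nat.lt_or_ge i0 j0 with h | h
    · exact key i0 j0 h ha0 hb0
    · exact key j0 i0 (by omega) hb0 ha0
  · -- inverse occurrence; wlog i ≤ j
    have key : ∀ (v : List (X × Bool)) i j, v.length = L → i ≤ j → occursAt v w i →
        occursAt (wordInv v) w j →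
        ∃ b i' j', i' + L ≤ w.length ∧ Qp b i' j' L (L / 2) w := by
      intro v i j hvL hij ha hb
      have hv : v ≠ [] := by intro hc; rw [hc] at hvL; simp at hvL; omega
      have hiL : i + L ≤ w.length := hvL ▸ occursAt_len ha hv
      have hjL : j + L ≤ w.length := by
        have := occursAt_len hb (by simp [wordInv]; intro hc; exact hv (by simpa using hc))
        rwa [wordInv_length, hvL] at this
      refine ⟨true, i, j, hiL, hjL, ?_⟩
      intro s hs1 hs2
      have hh1 : 1 ≤ L / 2 := by omega
      have hsrc : src true i j L s = i + (L - 1 - (s - j)) := by simp [src]; omega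
      have hlt : src true i j L s < j + L - L / 2 := by rw [hsrc]; omega
      refine ⟨hlt, ?_⟩
      have ht : s - j < L := by omega
      have e1 : w[s]? = (wordInv v)[s - j]? := by
        have := occursAt_get hb (t := s - j) (by rw [wordInv_length, hvL]; omega)
        have e2 : j + (s - j) = s := by omega
        rwa [e2] at this
      rw [e1, wordInv_get (by rw [hvL]; omega), hvL]
      rw [hsrc, ← occursAt_get ha (t := L - 1 - (s - j)) (by omega)]
      simp
    rcases le_or_gt i0 j0 with h | h
    · exact key v i0 j0 hL h ha0 hb0
    · refine key (wordInv v) j0 i0 (by simp [hL]) (by omega) hb0 ?_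
      rwa [wordInv_wordInv]

lemma inj_Qp {m L h : ℕ} {b : Bool} {i j : ℕ} {w₁ w₂ : List (X × Bool)}
    (l1 : w₁.length = m) (l2 : w₂.length = m) (q1 : Qp b i j L h w₁) (q2 : Qp b i j L h w₂)
    (e1 : w₁.take (j + L - h) = w₂.take (j + L - h)) (e2 : w₁.drop (j + L) = w₂.drop (j + L)) :
    w₁ = w₂ := by
  have key : ∀ s, s < j + L - h → w₁[s]? = w₂[s]? := by
    intro s hs
    have := congrArg (fun l => l[s]?) e1
    simpa [List.getElem?_take, hs] using this
  apply List.ext_getElem?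
  intro s
  by_cases hs1 : s < j + L - h
  · exact key s hs1
  by_cases hs2 : s < j + L
  · obtain ⟨hlt1, heq1⟩ := q1.2 s (by omega) hs2
    obtain ⟨-, heq2⟩ := q2.2 s (by omega) hs2
    rw [heq1, heq2, key _ hlt1]
  · have := congrArg (fun l => l[s - (j + L)]?) e2
    simp only [List.getElem?_drop] at this
    have e3 : j + L + (s - (j + L)) = s := by omega
    rwa [e3] at this

end Pieces


section Count2
variable {X : Type*} [DecidableEq X] [Fintype X]

open scoped Classical

lemma card_letters (hr : 2 ≤ Fintype.card X) : 4 ≤ Fintype.card (X × Bool) := by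
  rw [Fintype.card_prod, Fintype.card_bool]
  omega

lemma card_RW_le (hr : 2 ≤ Fintype.card X) (t : ℕ) :
    (RW X t).card ≤ (Fintype.card (X × Bool) - 1) ^ (t + 1) := by
  have hk := card_letters hr
  rw [card_RW]
  rcases t with _ | s
  · rw [if_pos rfl, pow_one]
    omega
  · simp only [Nat.succ_ne_zero, if_neg, if_false, Nat.add_sub_cancel]
    have h2 : Fintype.card (X × Bool) ≤ (Fintype.card (X × Bool) - 1) ^ 2 := by
      obtain ⟨q, hq⟩ : ∃ q, Fintype.card (X × Bool) = q + 1 :=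
        ⟨_, (Nat.succ_pred_eq_of_pos (by omega)).symm⟩
      rw [hq, Nat.add_sub_cancel]
      nlinarith
    calc Fintype.card (X × Bool) * (Fintype.card (X × Bool) - 1) ^ s
        ≤ (Fintype.card (X × Bool) - 1) ^ 2 * (Fintype.card (X × Bool) - 1) ^ s :=
          Nat.mul_le_mul_right _ h2
      _ = (Fintype.card (X × Bool) - 1) ^ (s + 1 + 1) := by rw [← pow_add]; ring_nf
  
lemma card_RW_ge (hr : 2 ≤ Fintype.card X) (t : ℕ) :
    (Fintype.card (X × Bool) - 1) ^ t ≤ (RW X t).card := by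
  have hk := card_letters hr
  rw [card_RW]
  rcases t with _ | s
  · simp
  · simp only [Nat.succ_ne_zero, if_neg, if_false, Nat.add_sub_cancel]
    calc (Fintype.card (X × Bool) - 1) ^ (s + 1)
        = (Fintype.card (X × Bool) - 1) * (Fintype.card (X × Bool) - 1) ^ s := by
          rw [pow_succ]; ring
      _ ≤ Fintype.card (X × Bool) * (Fintype.card (X × Bool) - 1) ^ s :=
          Nat.mul_le_mul_right _ (by omega)

lemma card_Qp_filter (hr : 2 ≤ Fintype.card X) (m L h : ℕ) (b : Bool) (i j : ℕ)
    (hh : h ≤ L) :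
    ((RW X m).filter (fun w => Qp b i j L h w)).card
      ≤ (Fintype.card (X × Bool) - 1) ^ (m + 2 - h) := by
  by_cases hne : ((RW X m).filter (fun w => Qp b i j L h w)).Nonempty
  · obtain ⟨w0, hw0⟩ := hne
    rw [Finset.mem_filter] at hw0
    have hlen0 : w0.length = m := (mem_RW.mp hw0.1).2
    have hjL : j + L ≤ m := hlen0 ▸ hw0.2.1
    have step : ((RW X m).filter (fun w => Qp b i j L h w)).card
        ≤ ((RW X (j + L - h)) ×ˢ (RW X (m - (j + L)))).card := by
      apply Finset.card_le_card_of_injOn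
        (fun w => (w.take (j + L - h), w.drop (j + L)))
      · intro w hw
        rw [Finset.mem_coe, Finset.mem_filter] at hw
        obtain ⟨hred, hlenw⟩ := mem_RW.mp hw.1
        rw [Finset.mem_coe, Finset.mem_product]
        constructor
        · exact mem_RW.mpr ⟨hred.take _, by rw [List.length_take]; omega⟩
        · exact mem_RW.mpr ⟨hred.drop _, by rw [List.length_drop]; omega⟩
      · intro w1 hw1 w2 hw2 hpair
        simp only [Finset.coe_filter, Set.mem_setOf_eq, Prod.mk.injEq] at hw1 hw2 hpair
        exact inj_Qp (mem_RW.mp hw1.1).2 (mem_RW.mp hw2.1).2 hw1.2 hw2.2 hpair.1 hpair.2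
    refine step.trans ?_
    rw [Finset.card_product]
    calc (RW X (j + L - h)).card * (RW X (m - (j + L))).card
        ≤ (Fintype.card (X × Bool) - 1) ^ (j + L - h + 1) *
            (Fintype.card (X × Bool) - 1) ^ (m - (j + L) + 1) :=
          Nat.mul_le_mul (card_RW_le hr _) (card_RW_le hr _)
      _ = (Fintype.card (X × Bool) - 1) ^ ((j + L - h + 1) + (m - (j + L) + 1)) := by
          rw [← pow_add]
      _ = (Fintype.card (X × Bool) - 1) ^ (m + 2 - h) := by
          congr 1
          omega
  · rw [Finset.not_nonempty_iff_eq_empty] at hne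
    simp [hne]

lemma card_bad (hr : 2 ≤ Fintype.card X) (m L : ℕ) (h1 : 1 ≤ L) :
    ((RW X m).filter (fun w => ∃ v, IsPiece v w ∧ v.length = L)).card
      ≤ 2 * (m + 1) ^ 2 * (Fintype.card (X × Bool) - 1) ^ (m + 2 - L / 2) := by
  have cover : (RW X m).filter (fun w => ∃ v, IsPiece v w ∧ v.length = L) ⊆
      ((Finset.univ : Finset Bool) ×ˢ (Finset.range (m+1) ×ˢ Finset.range (m+1))).biUnion
        (fun p => (RW X m).filter (fun w => Qp p.1 p.2.1 p.2.2 L (L / 2) w)) := by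
    intro w hw
    rw [Finset.mem_filter] at hw
    obtain ⟨hwRW, v, hv, hvL⟩ := hw
    obtain ⟨b, i, j, hiL, hq⟩ := extract hv hvL h1
    have hlen : w.length = m := (mem_RW.mp hwRW).2
    have hjL : j + L ≤ m := hlen ▸ hq.1
    refine Finset.mem_biUnion.mpr ⟨(b, (i, j)), ?_, Finset.mem_filter.mpr ⟨hwRW, hq⟩⟩
    rw [hlen] at hiL
    simp only [Finset.mem_product, Finset.mem_univ, Finset.mem_range, true_and]
    omega
  refine (Finset.card_le_card cover).trans ?_
  refine (Finset.card_biUnion_le).trans ?_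
  refine (Finset.sum_le_card_nsmul _ _ ((Fintype.card (X × Bool) - 1) ^ (m + 2 - L / 2))
    (fun p _ => card_Qp_filter hr m L (L / 2) p.1 p.2.1 p.2.2 (Nat.div_le_self L 2))).trans ?_
  simp only [Finset.card_product, Finset.card_univ, Fintype.card_bool, Finset.card_range,
    smul_eq_mul]
  ring_nf
  omega

end Count2
/-- A subset of a free group is negligible if for some `ε > 0` all but finitely many of
its elements `p` have a piece of length at least `ε·|p|`. -/
def Negligible {X : Type*} [DecidableEq X] (P : Set (FreeGroup X)) : Prop :=
  ∃ ε : ℝ, 0 < ε ∧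
    {p ∈ P | ¬ ∃ v, IsPiece v p.toWord ∧ ε * glen p ≤ (v.length : ℝ)}.Finite


section Glue
variable {X : Type*} [DecidableEq X] [Fintype X]

open scoped Classical

def ballW (X : Type*) [DecidableEq X] [Fintype X] (n : ℕ) : Finset (List (X × Bool)) :=
  (Finset.range (n + 1)).biUnion (fun t => RW X t)

lemma mem_ballW {n : ℕ} {w : List (X × Bool)} :
    w ∈ ballW X n ↔ Red' w ∧ w.length ≤ n := by
  simp only [ballW, Finset.mem_biUnion, Finset.mem_range]
  constructor
  · rintro ⟨t, ht, hw⟩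
    obtain ⟨h1, h2⟩ := mem_RW.mp hw
    exact ⟨h1, by omega⟩
  · rintro ⟨h1, h2⟩
    exact ⟨w.length, by omega, mem_RW.mpr ⟨h1, rfl⟩⟩

lemma toWord_ball_eq (n : ℕ) :
    (FreeGroup.toWord '' {g : FreeGroup X | glen g ≤ n}) = ↑(ballW X n) := by
  ext w
  simp only [Set.mem_image, Set.mem_setOf_eq, Finset.coe_sort_coe, Finset.mem_coe, mem_ballW]
  constructor
  · rintro ⟨g, hg, rfl⟩
    exact ⟨red'_toWord g, hg⟩
  · rintro ⟨h1, h2⟩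
    refine ⟨FreeGroup.mk w, ?_, ?_⟩
    · show (FreeGroup.mk w).toWord.length ≤ n
      rw [FreeGroup.toWord_mk, reduce_eq_self_of_red' h1]
      exact h2
    · rw [FreeGroup.toWord_mk, reduce_eq_self_of_red' h1]

lemma ncard_ball (n : ℕ) : ({g : FreeGroup X | glen g ≤ n}).ncard = (ballW X n).card := by
  rw [← Set.ncard_image_of_injective _ FreeGroup.toWord_injective, toWord_ball_eq,
    Set.ncard_coe_finset]

lemma ball_finite (n : ℕ) : ({g : FreeGroup X | glen g ≤ n}).Finite := by
  apply Set.Finite.of_finite_image _ FreeGroup.toWord_injective.injOn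
  rw [toWord_ball_eq]
  exact (ballW X n).finite_toSet

lemma ballW_card_ge (hr : 2 ≤ Fintype.card X) (n : ℕ) :
    (Fintype.card (X × Bool) - 1) ^ n ≤ (ballW X n).card := by
  refine (card_RW_ge hr n).trans (Finset.card_le_card ?_)
  intro w hw
  exact mem_ballW.mpr ⟨(mem_RW.mp hw).1, le_of_eq (mem_RW.mp hw).2⟩

noncomputable def badW (X : Type*) [DecidableEq X] [Fintype X] (ε : ℝ) (n : ℕ) : Finset (List (X × Bool)) :=
  (ballW X n).filter (fun w => ∃ v, IsPiece v w ∧ ε * w.length ≤ (v.length : ℝ))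

lemma no_piece_nil {v : List (X × Bool)} : ¬ IsPiece v ([] : List (X × Bool)) := by
  rintro ⟨hv, h⟩
  have : ∃ i, occursAt v ([] : List (X × Bool)) i := by
    rcases h with ⟨i, j, _, h1, _⟩ | ⟨i, j, h1, _⟩ <;> exact ⟨i, h1⟩
  obtain ⟨i, hi⟩ := this
  unfold occursAt at hi
  simp at hi
  exact hv hi

lemma ceil_mono_step {ε : ℝ} (hε : 0 ≤ ε) (hε1 : ε ≤ 1) (m : ℕ) :
    ⌈ε * (m + 1 : ℕ)⌉₊ ≤ ⌈ε * m⌉₊ + 1 := by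
  have h1 : ε * (m + 1 : ℕ) ≤ ε * m + 1 := by
    push_cast
    nlinarith
  calc ⌈ε * (m + 1 : ℕ)⌉₊ ≤ ⌈ε * m + 1⌉₊ := Nat.ceil_mono h1
    _ = ⌈ε * m⌉₊ + 1 := Nat.ceil_add_one (by positivity)

lemma exp_mono {ε : ℝ} (hε : 0 ≤ ε) (hε1 : ε ≤ 1) {m n : ℕ} (h : m ≤ n) :
    m + 2 - ⌈ε * m⌉₊ / 2 ≤ n + 2 - ⌈ε * n⌉₊ / 2 := by
  induction n, h using Nat.le_induction with
  | base => exact le_rfl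
  | succ n hn ih =>
    refine ih.trans ?_
    have := ceil_mono_step hε hε1 n
    omega

lemma badW_card (hr : 2 ≤ Fintype.card X) {ε : ℝ} (hε : 0 < ε) (hε1 : ε ≤ 1) (n : ℕ) :
    (badW X ε n).card ≤ (n + 1) * (2 * (n + 1) ^ 2 *
      (Fintype.card (X × Bool) - 1) ^ (n + 2 - ⌈ε * n⌉₊ / 2)) := by
  rw [badW, ballW, Finset.filter_biUnion]
  refine Finset.card_biUnion_le.trans ?_
  refine (Finset.sum_le_card_nsmul _ _
    (2 * (n + 1) ^ 2 * (Fintype.card (X × Bool) - 1) ^ (n + 2 - ⌈ε * n⌉₊ / 2)) ?_).trans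
    (by rw [Finset.card_range, smul_eq_mul])
  intro m hm
  rw [Finset.mem_range] at hm
  rcases Nat.eq_zero_or_pos m with rfl | hm1
  · have : (RW X 0).filter
        (fun w => ∃ v, IsPiece v w ∧ ε * w.length ≤ (v.length : ℝ)) = ∅ := by
      rw [Finset.filter_eq_empty_iff]
      intro w hw
      have hw0 : w = [] := List.length_eq_zero_iff.mp (mem_RW.mp hw).2
      subst hw0
      rintro ⟨v, hv, -⟩
      exact no_piece_nil hv
    rw [this]
    simp
  · set L := ⌈ε * m⌉₊ with hLdef
    have hL1 : 1 ≤ L := Nat.ceil_pos.mpr (by positivity)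
    have hsub : (RW X m).filter
        (fun w => ∃ v, IsPiece v w ∧ ε * w.length ≤ (v.length : ℝ)) ⊆
        (RW X m).filter (fun w => ∃ v, IsPiece v w ∧ v.length = L) := by
      intro w hw
      rw [Finset.mem_filter] at hw ⊢
      obtain ⟨hwRW, v, hv, hvlen⟩ := hw
      have hwm : w.length = m := (mem_RW.mp hwRW).2
      have hLv : L ≤ v.length := by
        rw [hLdef]
        refine Nat.ceil_le.mpr ?_
        rw [← hwm]
        exact hvlen
      obtain ⟨v', hv'1, hv'2⟩ := piece_trunc hv hL1 hLv
      exact ⟨hwRW, v', hv'2, hv'1⟩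
    refine (Finset.card_le_card hsub).trans ((card_bad hr m L hL1).trans ?_)
    have hq1 : 1 ≤ Fintype.card (X × Bool) - 1 := by
      have := card_letters hr
      omega
    refine Nat.mul_le_mul (Nat.mul_le_mul_left _ (Nat.pow_le_pow_left (by omega) _))
      (Nat.pow_le_pow_right hq1 ?_)
    exact exp_mono hε.le hε1 (by omega)

end Glue
/-- Every negligible subset of a free group of rank ≥ 2 is CT-negligible: the proportion
of its elements in the ball of radius n tends to 0. -/
theorem negligible_is_CT_negligible {X : Type*} [DecidableEq X] [Fintype X]
    (hr : 2 ≤ Fintype.card X) (P : Set (FreeGroup X)) (hP : Negligible P) :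
    Filter.Tendsto
      (fun n : ℕ =>
        ((P ∩ {g : FreeGroup X | glen g ≤ n}).ncard : ℝ) /
          ({g : FreeGroup X | glen g ≤ n}.ncard : ℝ))
      Filter.atTop (nhds 0) := by
  classical
  obtain ⟨ε₀, hε₀, hfin₀⟩ := hP
  set ε : ℝ := min ε₀ 1 with hεdef
  have hε : 0 < ε := lt_min hε₀ one_pos
  have hε1 : ε ≤ 1 := min_le_right _ _
  set E : Set (FreeGroup X) :=
    {p ∈ P | ¬ ∃ v, IsPiece v p.toWord ∧ ε * glen p ≤ (v.length : ℝ)} with hEdef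
  have hfin : E.Finite := by
    refine hfin₀.subset ?_
    rintro p ⟨hp, hnp⟩
    refine ⟨hp, ?_⟩
    rintro ⟨v, hv, hlen⟩
    refine hnp ⟨v, hv, le_trans ?_ hlen⟩
    exact mul_le_mul_of_nonneg_right (min_le_left _ _) (Nat.cast_nonneg _)
  set C : ℕ := E.ncard with hCdef
  set q : ℕ := Fintype.card (X × Bool) - 1 with hqdef
  have hk := card_letters hr
  have hq3 : 3 ≤ q := by omega
  -- per-n counting bound
  have key : ∀ n : ℕ, (P ∩ {g : FreeGroup X | glen g ≤ n}).ncard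
      ≤ C + (badW X ε n).card := by
    intro n
    set Bad : Set (FreeGroup X) :=
      {g : FreeGroup X | glen g ≤ n ∧ ∃ v, IsPiece v g.toWord ∧ ε * glen g ≤ (v.length : ℝ)}
      with hBaddef
    have hBadfin : Bad.Finite := (ball_finite n).subset (fun g h => h.1)
    have hsub : P ∩ {g : FreeGroup X | glen g ≤ n} ⊆ E ∪ Bad := by
      rintro p ⟨hpP, hpB⟩
      by_cases h : ∃ v, IsPiece v p.toWord ∧ ε * glen p ≤ (v.length : ℝ)
      · exact Or.inr ⟨hpB, h⟩
      · exact Or.inl ⟨hpP, h⟩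
    have h1 : (P ∩ {g : FreeGroup X | glen g ≤ n}).ncard ≤ (E ∪ Bad).ncard :=
      Set.ncard_le_ncard hsub (hfin.union hBadfin)
    have h2 : (E ∪ Bad).ncard ≤ C + Bad.ncard := Set.ncard_union_le _ _
    have h3 : Bad.ncard ≤ (badW X ε n).card := by
      rw [← Set.ncard_coe_finset (badW X ε n),
        ← Set.ncard_image_of_injective Bad FreeGroup.toWord_injective]
      refine Set.ncard_le_ncard ?_ (badW X ε n).finite_toSet
      rintro w ⟨g, ⟨hg1, hg2⟩, rfl⟩
      rw [Finset.mem_coe, badW, Finset.mem_filter]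
      exact ⟨mem_ballW.mpr ⟨red'_toWord g, hg1⟩, hg2⟩
    omega
  -- ball lower bound
  have hball : ∀ n : ℕ, ((q : ℝ)) ^ n ≤ (({g : FreeGroup X | glen g ≤ n}).ncard : ℝ) := by
    intro n
    rw [ncard_ball]
    exact_mod_cast ballW_card_ge hr n
  -- analysis setup
  have hq1R : (1 : ℝ) < (q : ℝ) := by exact_mod_cast (by omega : 1 < q)
  have hq0R : (0 : ℝ) < (q : ℝ) := by linarith
  set x : ℝ := (q : ℝ)⁻¹ with hxdef
  have hx0 : 0 < x := by positivity
  have hx1 : x < 1 := by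
    rw [hxdef, inv_lt_one_iff₀]
    right; exact hq1R
  set ρ : ℝ := x ^ ((ε / 2 : ℝ)) with hρdef
  have hρ0 : 0 < ρ := Real.rpow_pos_of_pos hx0 _
  have hρ1 : ρ < 1 := Real.rpow_lt_one hx0.le hx1 (by positivity)
  set K : ℝ := 2 * (q : ℝ) ^ 2 / x with hKdef
  have hmaj : ∀ n : ℕ,
      ((P ∩ {g : FreeGroup X | glen g ≤ n}).ncard : ℝ) /
        (({g : FreeGroup X | glen g ≤ n}).ncard : ℝ)
      ≤ (C : ℝ) * x ^ n + K * ((n : ℝ) + 1) ^ 3 * ρ ^ n := by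
    intro n
    set c : ℕ := ⌈ε * n⌉₊ / 2 with hcdef
    have hLn : ⌈ε * n⌉₊ ≤ n := Nat.ceil_le.mpr (by
      calc ε * n ≤ 1 * n := mul_le_mul_of_nonneg_right hε1 (Nat.cast_nonneg _)
        _ = (n : ℝ) := one_mul _)
    have step1 : ((P ∩ {g : FreeGroup X | glen g ≤ n}).ncard : ℝ) /
        (({g : FreeGroup X | glen g ≤ n}).ncard : ℝ)
        ≤ ((C : ℝ) + (n + 1) * (2 * (n + 1) ^ 2 * (q : ℝ) ^ (n + 2 - c))) / (q : ℝ) ^ n := by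
      refine div_le_div₀ (by positivity) ?_ (by positivity) (hball n)
      have h4 := (key n).trans (Nat.add_le_add_left (badW_card hr hε hε1 n) C)
      calc ((P ∩ {g : FreeGroup X | glen g ≤ n}).ncard : ℝ)
          ≤ ((C + (n + 1) * (2 * (n + 1) ^ 2 * q ^ (n + 2 - c)) : ℕ) : ℝ) := by
            exact_mod_cast h4
        _ = (C : ℝ) + (n + 1) * (2 * (n + 1) ^ 2 * (q : ℝ) ^ (n + 2 - c)) := by push_cast; ring
    refine step1.trans ?_
    rw [add_div]
    have e1 : (C : ℝ) / (q : ℝ) ^ n = (C : ℝ) * x ^ n := by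
      rw [hxdef, inv_pow, div_eq_mul_inv]
    have e2 : ((n : ℝ) + 1) * (2 * ((n : ℝ) + 1) ^ 2 * (q : ℝ) ^ (n + 2 - c)) / (q : ℝ) ^ n
        = 2 * (q : ℝ) ^ 2 * ((n : ℝ) + 1) ^ 3 * x ^ c := by
      have hpow : (q : ℝ) ^ (n + 2 - c) * (q : ℝ) ^ c = (q : ℝ) ^ (n + 2) := by
        rw [← pow_add]
        congr 1
        omega
      have hc0 : ((q : ℝ) ^ c) ≠ 0 := by positivity
      have hn0 : ((q : ℝ) ^ n) ≠ 0 := by positivity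
      rw [div_eq_iff hn0, hxdef, inv_pow]
      have e5 : (q : ℝ) ^ (n + 2 - c) = (q : ℝ) ^ 2 * (q : ℝ) ^ n * ((q : ℝ) ^ c)⁻¹ := by
        rw [eq_mul_inv_iff_mul_eq₀ hc0, hpow, pow_add]; ring
      rw [e5]; ring
    rw [e1, e2]
    refine (add_le_add_iff_left _).mpr ?_
    have hxc : x ^ c ≤ ρ ^ n / x := by
      have h2 : (⌈ε * n⌉₊ : ℝ) ≥ ε * n := Nat.le_ceil _
      have h3 : 2 * c + 1 ≥ ⌈ε * n⌉₊ := by omega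
      have h4 : (2 * (c : ℝ) + 1) ≥ (⌈ε * n⌉₊ : ℝ) := by exact_mod_cast h3
      have h1 : ((c : ℝ)) ≥ (ε / 2) * n - 1 := by nlinarith
      have h5 : x ^ c = x ^ ((c : ℝ)) := (Real.rpow_natCast x c).symm
      have h6 : x ^ ((c : ℝ)) ≤ x ^ ((ε / 2) * n - 1 : ℝ) :=
        Real.rpow_le_rpow_of_exponent_ge hx0 hx1.le h1
      have h7 : x ^ ((ε / 2) * n - 1 : ℝ) = ρ ^ n / x := by
        rw [Real.rpow_sub hx0, Real.rpow_one]
        congr 1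
        rw [hρdef, ← Real.rpow_natCast (x ^ (ε / 2 : ℝ)) n, ← Real.rpow_mul hx0.le]
      rw [h5]
      exact h6.trans_eq h7
    calc 2 * (q : ℝ) ^ 2 * ((n : ℝ) + 1) ^ 3 * x ^ c
        ≤ 2 * (q : ℝ) ^ 2 * ((n : ℝ) + 1) ^ 3 * (ρ ^ n / x) := by
          refine mul_le_mul_of_nonneg_left hxc (by positivity)
      _ = K * ((n : ℝ) + 1) ^ 3 * ρ ^ n := by
          rw [hKdef]
          ring
  -- limits
  have hbase : Filter.Tendsto (fun n : ℕ => ((n : ℝ)) ^ 3 * ρ ^ n) Filter.atTop (nhds 0) :=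
    (summable_pow_mul_geometric_of_norm_lt_one (R := ℝ) 3
      (by rw [Real.norm_eq_abs, abs_of_pos hρ0]; exact hρ1)).tendsto_atTop_zero
  have hshift : Filter.Tendsto (fun n : ℕ => (((n + 1 : ℕ)) : ℝ) ^ 3 * ρ ^ (n + 1))
      Filter.atTop (nhds 0) := hbase.comp (Filter.tendsto_add_atTop_nat 1)
  have t2 : Filter.Tendsto (fun n : ℕ => K * ((n : ℝ) + 1) ^ 3 * ρ ^ n)
      Filter.atTop (nhds 0) := by
    have h8 := hshift.const_mul (K / ρ)
    rw [mul_zero] at h8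
    refine Filter.Tendsto.congr ?_ h8
    intro n
    push_cast
    rw [pow_succ]
    field_simp
    ring
  have t1 : Filter.Tendsto (fun n : ℕ => (C : ℝ) * x ^ n) Filter.atTop (nhds 0) := by
    have := (tendsto_pow_atTop_nhds_zero_of_lt_one hx0.le hx1).const_mul (C : ℝ)
    rwa [mul_zero] at this
  have htot := t1.add t2
  rw [add_zero] at htot
  exact squeeze_zero (fun n => by positivity) hmaj htot
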